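/- Under the Selection model, let M := (A − Price + ρ·u)/σ. Then almost surely E[ (1 − S)·Φ(M)/(1 − Φ(M)) − S | σ(Z) ] ≥ 0. -/

import Mathlib

open MeasureTheory ProbabilityTheory

/-- Standard normal density. -/
noncomputable def phi (x : ℝ) : ℝ := (Real.sqrt (2 * Real.pi))⁻¹ * Real.exp (-x ^ 2 / 2)

/-- Standard normal CDF. -/
noncomputable def Phi (x : ℝ) : ℝ := ∫ s in Set.Iic x, phi s

/-- Standard normal hazard function (inverse Mills ratio). -/
noncomputable def lam (x : ℝ) : ℝ := phi x / (1 - Phi x)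

/-- Mills-ratio-type function `φ(x)/Φ(x)`. -/
noncomputable def mills (x : ℝ) : ℝ := phi x / Phi x


open Real

lemma phi_eq : phi = gaussianPDFReal 0 1 := by ext x; simp [phi, gaussianPDFReal]

lemma phi_integrable : Integrable phi := phi_eq ▸ integrable_gaussianPDFReal 0 1

lemma phi_nonneg (x : ℝ) : 0 ≤ phi x := phi_eq ▸ gaussianPDFReal_nonneg 0 1 x

lemma Phi_eq (t : ℝ) : Phi t = ((gaussianReal 0 1) (Set.Iic t)).toReal := by
  rw [gaussianReal_apply_eq_integral 0 one_ne_zero,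
    ENNReal.toReal_ofReal (integral_nonneg (fun x => gaussianPDFReal_nonneg 0 1 x))]
  simp [Phi, phi_eq]

lemma Phi_mono : Monotone Phi := fun a b hab =>
  setIntegral_mono_set phi_integrable.integrableOn
    (Filter.Eventually.of_forall phi_nonneg)
    (HasSubset.Subset.eventuallyLE (Set.Iic_subset_Iic.mpr hab))

lemma Phi_measurable : Measurable Phi := Phi_mono.measurable

lemma Phi_nonneg (t : ℝ) : 0 ≤ Phi t := integral_nonneg (fun x => phi_nonneg x)

lemma gauss_Ici_toReal (t : ℝ) : ((gaussianReal 0 1) (Set.Ici t)).toReal = 1 - Phi t := by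
  have hcompl := measure_add_measure_compl (μ := gaussianReal 0 1) (measurableSet_Iic (a := t))
  rw [Set.compl_Iic, measure_univ] at hcompl
  have hIci : (gaussianReal 0 1) (Set.Ici t) = (gaussianReal 0 1) (Set.Ioi t) := by
    refine le_antisymm ?_ (measure_mono Set.Ioi_subset_Ici_self)
    have h0 : (gaussianReal 0 1) {t} = 0 :=
      gaussianReal_absolutelyContinuous 0 one_ne_zero (Real.volume_singleton)
    calc (gaussianReal 0 1) (Set.Ici t) = (gaussianReal 0 1) ({t} ∪ Set.Ioi t) := by
          rw [Set.singleton_union, Set.Ioi_insert]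
      _ ≤ (gaussianReal 0 1) {t} + (gaussianReal 0 1) (Set.Ioi t) := measure_union_le _ _
      _ = (gaussianReal 0 1) (Set.Ioi t) := by rw [h0, zero_add]
  rw [hIci, Phi_eq]
  have h1 : ((gaussianReal 0 1) (Set.Iic t)).toReal + ((gaussianReal 0 1) (Set.Ioi t)).toReal = 1 := by
    rw [← ENNReal.toReal_add (measure_ne_top _ _) (measure_ne_top _ _), hcompl]; simp
  linarith

lemma Phi_lt_one (t : ℝ) : Phi t < 1 := by
  have h : (0:ℝ) < ∫ x in Set.Ici t, gaussianPDFReal 0 1 x := by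
    have h1 : (0:ℝ) < ∫ x in t..(t+1), gaussianPDFReal 0 1 x := by
      apply intervalIntegral.intervalIntegral_pos_of_pos_on
      · exact (integrable_gaussianPDFReal 0 1).intervalIntegrable
      · exact fun x _ => gaussianPDFReal_pos 0 1 x one_ne_zero
      · linarith
    have h2 : ∫ x in t..(t+1), gaussianPDFReal 0 1 x ≤ ∫ x in Set.Ici t, gaussianPDFReal 0 1 x := by
      rw [intervalIntegral.integral_of_le (by linarith)]
      refine setIntegral_mono_set (integrable_gaussianPDFReal 0 1).integrableOn
        (Filter.Eventually.of_forall (gaussianPDFReal_nonneg 0 1)) ?_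
      exact HasSubset.Subset.eventuallyLE (fun x hx => le_of_lt hx.1)
    linarith
  have := gauss_Ici_toReal t
  rw [gaussianReal_apply_eq_integral 0 one_ne_zero,
    ENNReal.toReal_ofReal (integral_nonneg (fun x => gaussianPDFReal_nonneg 0 1 x))] at this
  linarith

lemma Phi_le_one (t : ℝ) : Phi t ≤ 1 := (Phi_lt_one t).le

lemma Phi_neg (t : ℝ) : Phi (-t) = 1 - Phi t := by
  have hmap : (gaussianReal 0 1).map ((-1 : ℝ) * ·) = gaussianReal 0 1 := by
    rw [gaussianReal_map_const_mul (-1 : ℝ)]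
    norm_num
  have hpre : ((-1 : ℝ) * ·) ⁻¹' (Set.Iic (-t)) = Set.Ici t := by
    ext x
    simp only [Set.mem_preimage, Set.mem_Iic, Set.mem_Ici]
    constructor <;> intro h <;> linarith
  have : (gaussianReal 0 1) (Set.Iic (-t)) = (gaussianReal 0 1) (Set.Ici t) := by
    conv_lhs => rw [← hmap]
    rw [Measure.map_apply (measurable_const_mul _) measurableSet_Iic, hpre]
  rw [Phi_eq, this, gauss_Ici_toReal]

lemma gauss_scaled_Ici {σ : ℝ} (hσ : 0 < σ) (y : ℝ) :
    ((gaussianReal 0 (Real.toNNReal (σ ^ 2))) (Set.Ici y)).toReal = 1 - Phi (y / σ) := by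
  have hmap : (gaussianReal 0 1).map (σ * ·) = gaussianReal 0 (Real.toNNReal (σ ^ 2)) := by
    rw [gaussianReal_map_const_mul σ]
    congr 1
    · ring
    · ext1
      simp [Real.toNNReal, max_eq_left (sq_nonneg σ)]
  have hpre : (σ * ·) ⁻¹' (Set.Ici y) = Set.Ici (y / σ) := by
    ext x
    simp only [Set.mem_preimage, Set.mem_Ici]
    rw [div_le_iff₀ hσ, mul_comm]
  rw [← hmap, Measure.map_apply (measurable_const_mul _) measurableSet_Ici, hpre,
    gauss_Ici_toReal]

lemma step_integral {σ : ℝ} (hσ : 0 < σ) (c : ℝ) :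
    ∫ x, (if 0 ≤ c + x then (1:ℝ) else 0) ∂(gaussianReal 0 (Real.toNNReal (σ ^ 2)))
      = Phi (c / σ) := by
  have heq : (fun x : ℝ => if 0 ≤ c + x then (1:ℝ) else 0)
      = (Set.Ici (-c)).indicator (fun _ => (1:ℝ)) := by
    ext x
    by_cases h : 0 ≤ c + x
    · rw [if_pos h, Set.indicator_of_mem (by simp [Set.mem_Ici]; linarith)]
    · rw [if_neg h, Set.indicator_of_notMem (by simp only [Set.mem_Ici, not_le]; linarith [not_le.mp h])]
  rw [heq, integral_indicator_const _ measurableSet_Ici, measureReal_def, gauss_scaled_Ici hσ, smul_eq_mul,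
    mul_one, neg_div, Phi_neg]
  ring

lemma step_eq_indicator (c : ℝ) : (fun x : ℝ => if 0 ≤ c + x then (1:ℝ) else 0)
    = (Set.Ici (-c)).indicator (fun _ => (1:ℝ)) := by
  ext x
  by_cases h : 0 ≤ c + x
  · rw [if_pos h, Set.indicator_of_mem (by simp only [Set.mem_Ici]; linarith)]
  · rw [if_neg h, Set.indicator_of_notMem
      (by simp only [Set.mem_Ici, not_le]; linarith [not_le.mp h])]

noncomputable def Gf (σ : ℝ) (p : ℝ × ℝ) : ℝ :=
  (1 - (if 0 ≤ p.1 + p.2 then (1:ℝ) else 0)) * Phi (p.1 / σ) / (1 - Phi (p.1 / σ))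
    - (if 0 ≤ p.1 + p.2 then (1:ℝ) else 0)

lemma Gf_meas (σ : ℝ) : Measurable (Gf σ) := by
  have hind : Measurable (fun p : ℝ × ℝ => if 0 ≤ p.1 + p.2 then (1:ℝ) else 0) := by
    refine Measurable.ite ?_ measurable_const measurable_const
    exact measurableSet_le measurable_const (measurable_fst.add measurable_snd)
  exact (((measurable_const.sub hind).mul
    (Phi_measurable.comp (measurable_fst.div_const σ))).div
    (measurable_const.sub (Phi_measurable.comp (measurable_fst.div_const σ)))).sub hind

lemma step_int {σ : ℝ} (c : ℝ) :
    Integrable (fun x : ℝ => if 0 ≤ c + x then (1:ℝ) else 0)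
      (gaussianReal 0 (Real.toNNReal (σ ^ 2))) := by
  rw [step_eq_indicator]
  exact (integrable_const (1:ℝ)).indicator measurableSet_Ici

lemma Gf_x_eq (σ : ℝ) (c : ℝ) : (fun x => Gf σ (c, x)) = fun x =>
    (1 - (if 0 ≤ c + x then (1:ℝ) else 0)) * (Phi (c / σ) / (1 - Phi (c / σ)))
      - (if 0 ≤ c + x then (1:ℝ) else 0) := by
  funext x
  simp only [Gf]
  ring

lemma Gf_int_x (σ : ℝ) (c : ℝ) :
    Integrable (fun x => Gf σ (c, x)) (gaussianReal 0 (Real.toNNReal (σ ^ 2))) := by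
  rw [Gf_x_eq]
  exact (((integrable_const 1).sub (step_int c)).mul_const _).sub (step_int c)

lemma Gf_inner {σ : ℝ} (hσ : 0 < σ) (c : ℝ) :
    ∫ x, Gf σ (c, x) ∂(gaussianReal 0 (Real.toNNReal (σ ^ 2))) = 0 := by
  have h1 : (0:ℝ) < 1 - Phi (c / σ) := by linarith [Phi_lt_one (c / σ)]
  have hi1 : Integrable (fun x : ℝ => (1 - (if 0 ≤ c + x then (1:ℝ) else 0))
      * (Phi (c / σ) / (1 - Phi (c / σ)))) (gaussianReal 0 (Real.toNNReal (σ ^ 2))) := by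
    apply Integrable.mul_const
    exact (integrable_const 1).sub (step_int c)
  have hi2 : Integrable (fun x : ℝ => (1 - (if 0 ≤ c + x then (1:ℝ) else 0)))
      (gaussianReal 0 (Real.toNNReal (σ ^ 2))) := by
    apply Integrable.sub (integrable_const 1) (step_int c)
  rw [Gf_x_eq, integral_sub hi1 (step_int c), integral_mul_const,
    integral_sub (integrable_const 1) (step_int c), integral_const,
    step_integral hσ]
  simp only [probReal_univ, smul_eq_mul, mul_one, one_smul]
  field_simp
  ring

lemma Gf_norm {σ : ℝ} (hσ : 0 < σ) (c : ℝ) :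
    ∫ x, ‖Gf σ (c, x)‖ ∂(gaussianReal 0 (Real.toNNReal (σ ^ 2))) = 2 * Phi (c / σ) := by
  have h1 : (0:ℝ) < 1 - Phi (c / σ) := by linarith [Phi_lt_one (c / σ)]
  have heq : (fun x => ‖Gf σ (c, x)‖) = fun x =>
      (1 - (if 0 ≤ c + x then (1:ℝ) else 0)) * (Phi (c / σ) / (1 - Phi (c / σ)))
        + (if 0 ≤ c + x then (1:ℝ) else 0) := by
    funext x
    by_cases h : 0 ≤ c + x
    · simp only [Gf, if_pos h]
      rw [show (1:ℝ) - 1 = 0 by ring, zero_mul, zero_div, zero_sub, norm_neg, norm_one]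
      ring
    · simp only [Gf, if_neg h]
      rw [Real.norm_of_nonneg (by
        have h2 := Phi_nonneg (c / σ)
        have h3 : 0 ≤ Phi (c / σ) / (1 - Phi (c / σ)) := div_nonneg h2 h1.le
        have h4 : ((1:ℝ) - 0) * Phi (c / σ) / (1 - Phi (c / σ)) - 0
            = Phi (c / σ) / (1 - Phi (c / σ)) := by ring
        linarith)]
      ring
  have hi1 : Integrable (fun x : ℝ => (1 - (if 0 ≤ c + x then (1:ℝ) else 0))
      * (Phi (c / σ) / (1 - Phi (c / σ)))) (gaussianReal 0 (Real.toNNReal (σ ^ 2))) := by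
    apply Integrable.mul_const
    exact (integrable_const 1).sub (step_int c)
  rw [heq, integral_add hi1 (step_int c), integral_mul_const,
    integral_sub (integrable_const 1) (step_int c), integral_const,
    step_integral hσ]
  simp only [probReal_univ, smul_eq_mul, mul_one, one_smul]
  field_simp
  ring

/-- Second odds-based moment inequality (ob2_rho). -/
theorem stmt_12
    {Ω : Type*} [MeasurableSpace Ω] (P : Measure Ω) [IsProbabilityMeasure P]
    {k : ℕ} (Z : Ω → (Fin k → ℝ)) (hZmeas : Measurable Z)
    (A B u ξ : Ω → ℝ)
    (hAint : Integrable A P) (hBint : Integrable B P) (huint : Integrable u P)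
    (hAZ : Measurable[MeasurableSpace.comap Z inferInstance] A)
    (hBZ : Measurable[MeasurableSpace.comap Z inferInstance] B)
    (humeas : Measurable u) (hξmeas : Measurable ξ)
    (huZ : P[u | MeasurableSpace.comap Z inferInstance] =ᵐ[P] 0)
    (σ ρ : ℝ) (hσ : 0 < σ)
    (hξindep : IndepFun ξ (fun ω => (Z ω, u ω)) P)
    (hξlaw : Measure.map ξ P = gaussianReal 0 (Real.toNNReal (σ ^ 2)))
    (Price S : Ω → ℝ)
    (hPrice : Price = fun ω => B ω + u ω)
    (hS : S = fun ω => if 0 ≤ A ω - Price ω + ρ * u ω + ξ ω then (1 : ℝ) else 0)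
     :
    0 ≤ᵐ[P] P[fun ω => (1 - S ω) * Phi ((A ω - Price ω + ρ * u ω) / σ) / (1 - Phi ((A ω - Price ω + ρ * u ω) / σ))
        - S ω
      | MeasurableSpace.comap Z inferInstance] := by
  subst hPrice hS
  beta_reduce
  -- notation
  have hm : MeasurableSpace.comap Z inferInstance ≤ _ := hZmeas.comap_le
  set pairZu : Ω → (Fin k → ℝ) × ℝ := fun ω => (Z ω, u ω) with hpairZu
  have hmZu : MeasurableSpace.comap pairZu inferInstance ≤ _ :=
    (hZmeas.prodMk humeas).comap_le
  set C : Ω → ℝ := fun ω => A ω - (B ω + u ω) + ρ * u ω with hCdef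
  set W : Ω → (Fin k → ℝ) × ℝ := fun ω => (Z ω, C ω) with hWdef
  set G : ((Fin k → ℝ) × ℝ) × ℝ → ℝ := fun p => Gf σ (p.1.2, p.2) with hGdef
  set μξ : Measure ℝ := gaussianReal 0 (Real.toNNReal (σ ^ 2)) with hμξdef
  have hZleZu : MeasurableSpace.comap Z inferInstance
      ≤ MeasurableSpace.comap pairZu inferInstance := by
    rw [show Z = Prod.fst ∘ pairZu from rfl, ← MeasurableSpace.comap_comp]
    exact MeasurableSpace.comap_mono measurable_fst.comap_le
  have hZuM : Measurable[MeasurableSpace.comap pairZu inferInstance] pairZu :=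
    Measurable.of_comap_le le_rfl
  have hAzu : Measurable[MeasurableSpace.comap pairZu inferInstance] A :=
    hAZ.mono hZleZu le_rfl
  have hBzu : Measurable[MeasurableSpace.comap pairZu inferInstance] B :=
    hBZ.mono hZleZu le_rfl
  have huzu : Measurable[MeasurableSpace.comap pairZu inferInstance] u :=
    measurable_snd.comp hZuM
  have hZzu : Measurable[MeasurableSpace.comap pairZu inferInstance] Z :=
    measurable_fst.comp hZuM
  have hCzu : Measurable[MeasurableSpace.comap pairZu inferInstance] C :=
    (hAzu.sub (hBzu.add huzu)).add (huzu.const_mul ρ)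
  have hWzu : Measurable[MeasurableSpace.comap pairZu inferInstance] W :=
    hZzu.prodMk hCzu
  have hWmeas : Measurable W := hWzu.mono hmZu le_rfl
  -- independence of W and ξ
  have hindep : IndepFun W ξ P := by
    rw [indepFun_iff_measure_inter_preimage_eq_mul]
    intro s t hs ht
    obtain ⟨s', hs', heq⟩ := MeasurableSpace.measurableSet_comap.mp (hWzu hs)
    have h := hξindep.measure_inter_preimage_eq_mul t s' ht hs'
    rw [← heq, Set.inter_comm, h, mul_comm]
  -- law of the pair
  have hpairlaw : P.map (fun ω => (W ω, ξ ω)) = (P.map W).prod μξ := by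
    rw [← hξlaw]
    exact (indepFun_iff_map_prod_eq_prod_map_map hWmeas.aemeasurable
      hξmeas.aemeasurable).mp hindep
  set ν : Measure ((Fin k → ℝ) × ℝ) := P.map W with hνdef
  haveI : IsProbabilityMeasure ν := Measure.isProbabilityMeasure_map hWmeas.aemeasurable
  have hGmeas : Measurable G :=
    (Gf_meas σ).comp ((measurable_fst.snd).prodMk measurable_snd)
  -- integrability of G on the product
  have hGint : Integrable G (ν.prod μξ) := by
    rw [integrable_prod_iff hGmeas.aestronglyMeasurable]
    constructor
    · exact Filter.Eventually.of_forall fun e => Gf_int_x σ e.2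
    · have hn : ∀ e : (Fin k → ℝ) × ℝ, ∫ x, ‖G (e, x)‖ ∂μξ = 2 * Phi (e.2 / σ) :=
        fun e => Gf_norm hσ e.2
      simp only [hn]
      refine (integrable_const (2:ℝ)).mono'
        ((Phi_measurable.comp (measurable_snd.div_const σ)).const_mul
          2).aestronglyMeasurable ?_
      refine Filter.Eventually.of_forall fun e => ?_
      rw [Real.norm_eq_abs, abs_of_nonneg (mul_nonneg (by norm_num) (Phi_nonneg _))]
      linarith [Phi_le_one (e.2 / σ)]
  -- integrability of the integrand
  have hfint : Integrable (fun ω => G (W ω, ξ ω)) P := by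
    have h1 : Integrable G (Measure.map (fun ω => (W ω, ξ ω)) P) := by
      rw [hpairlaw]; exact hGint
    exact (integrable_map_measure hGmeas.aestronglyMeasurable
      (hWmeas.prodMk hξmeas).aemeasurable).mp h1
  -- set integrals vanish on comap Z sets
  have hset : ∀ s : Set Ω, MeasurableSet[MeasurableSpace.comap Z inferInstance] s →
      P s < ⊤ → ∫ ω in s, G (W ω, ξ ω) ∂P = 0 := by
    intro s hs _
    obtain ⟨t, ht, rfl⟩ := hs
    have hpre : Z ⁻¹' t = (fun ω => (W ω, ξ ω)) ⁻¹' ((t ×ˢ Set.univ) ×ˢ Set.univ) := by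
      ext ω
      simp [hWdef]
    rw [hpre, ← setIntegral_map (((ht.prod MeasurableSet.univ)).prod MeasurableSet.univ)
      hGmeas.aestronglyMeasurable (hWmeas.prodMk hξmeas).aemeasurable, hpairlaw]
    have hres : (ν.prod μξ).restrict ((t ×ˢ Set.univ) ×ˢ Set.univ)
        = (ν.restrict (t ×ˢ Set.univ)).prod μξ := by
      rw [← Measure.prod_restrict, Measure.restrict_univ]
    have hGint2 : Integrable G ((ν.restrict (t ×ˢ Set.univ)).prod μξ) := by
      rw [← hres]
      exact hGint.restrict
    calc ∫ p in (t ×ˢ Set.univ) ×ˢ Set.univ, G p ∂(ν.prod μξ)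
        = ∫ p, G p ∂((ν.restrict (t ×ˢ Set.univ)).prod μξ) := by rw [← hres]
      _ = ∫ e, ∫ x, G (e, x) ∂μξ ∂(ν.restrict (t ×ˢ Set.univ)) := integral_prod G hGint2
      _ = 0 := by
          have hz : ∀ e : (Fin k → ℝ) × ℝ, ∫ x, G (e, x) ∂μξ = 0 := fun e => Gf_inner hσ e.2
          simp only [hz, integral_zero]
  -- conclude via uniqueness of conditional expectation
  have hcond : (fun _ => (0:ℝ)) =ᵐ[P]
      P[fun ω => G (W ω, ξ ω) | MeasurableSpace.comap Z inferInstance] := by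
    refine ae_eq_condExp_of_forall_setIntegral_eq hm hfint
      (fun s _ _ => (integrable_const (0:ℝ)).integrableOn)
      (fun s hs hμs => ?_) ?_
    · rw [hset s hs hμs]
      simp
    · exact StronglyMeasurable.aestronglyMeasurable stronglyMeasurable_const
  have hgoal : (fun ω => (1 - (if 0 ≤ A ω - (B ω + u ω) + ρ * u ω + ξ ω then (1:ℝ) else 0))
        * Phi ((A ω - (B ω + u ω) + ρ * u ω) / σ)
        / (1 - Phi ((A ω - (B ω + u ω) + ρ * u ω) / σ))
      - (if 0 ≤ A ω - (B ω + u ω) + ρ * u ω + ξ ω then (1:ℝ) else 0))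
      = fun ω => G (W ω, ξ ω) := rfl
  rw [hgoal]
  filter_upwards [hcond] with ω hω
  simp only [Pi.zero_apply, ← hω, le_refl]
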